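/- Let ρ ≥ 1, let Σ₁ and Σ₂ be d×d positive definite matrices, and suppose there exists a d×d positive definite matrix H such that ‖I − H^{-1/2} Σ₁ H^{-1/2}‖_F ≤ ρ and ‖I − H^{-1/2} Σ₂ H^{-1/2}‖_F ≤ ρ. Then for every d×d positive definite matrix Σ: ‖Σ^{-1/2} Σ₁ Σ^{-1/2} − Σ^{-1/2} Σ₂ Σ^{-1/2}‖_F ≤ 20·ρ·max(‖Σ^{-1/2} Σ₁ Σ^{-1/2}‖_op, ‖Σ^{-1/2} Σ₂ Σ^{-1/2}‖_op). -/

import Mathlib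

open Matrix MeasureTheory ProbabilityTheory

noncomputable section

namespace ListDecCov

/-- Frobenius norm of a square real matrix. -/
def frobNorm {d : ℕ} (M : Matrix (Fin d) (Fin d) ℝ) : ℝ :=
  Real.sqrt (∑ i, ∑ j, (M i j) ^ 2)

/-- Operator (spectral) norm of a square real matrix. -/
def opNorm {d : ℕ} (M : Matrix (Fin d) (Fin d) ℝ) : ℝ :=
  ‖Matrix.toEuclideanCLM (𝕜 := ℝ) M‖

/-- Euclidean (ℓ²) norm of a vector. -/
def vecNorm {d : ℕ} (v : Fin d → ℝ) : ℝ :=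
  Real.sqrt (∑ i, (v i) ^ 2)

/-- The four Penrose equations characterizing the Moore–Penrose pseudoinverse. -/
def IsMoorePenrose {d : ℕ} (H Hd : Matrix (Fin d) (Fin d) ℝ) : Prop :=
  H * Hd * H = H ∧ Hd * H * Hd = Hd ∧ (H * Hd)ᵀ = H * Hd ∧ (Hd * H)ᵀ = Hd * H

/-- Average of `f` over a finite set. -/
def fAvg {X V : Type*} [AddCommMonoid V] [Module ℝ V] (A : Finset X) (f : X → V) : V :=
  (A.card : ℝ)⁻¹ • ∑ x ∈ A, f x

/-- Average of `f` over a multiset. -/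
def msAvg {X V : Type*} [AddCommMonoid V] [Module ℝ V] (T : Multiset X) (f : X → V) : V :=
  (T.card : ℝ)⁻¹ • (T.map f).sum

/-- Empirical covariance matrix of `f x`, `x` ranging over a finite set. -/
def fCov {X : Type*} {d : ℕ} (A : Finset X) (f : X → (Fin d → ℝ)) :
    Matrix (Fin d) (Fin d) ℝ :=
  fAvg A (fun x => Matrix.vecMulVec (f x) (f x)) - Matrix.vecMulVec (fAvg A f) (fAvg A f)

/-- Empirical covariance matrix of `f x`, `x` ranging over a multiset. -/
def msCov {X : Type*} {d : ℕ} (T : Multiset X) (f : X → (Fin d → ℝ)) :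
    Matrix (Fin d) (Fin d) ℝ :=
  msAvg T (fun x => Matrix.vecMulVec (f x) (f x)) - Matrix.vecMulVec (msAvg T f) (msAvg T f)

/-- Empirical variance of `g x`, `x` ranging over a finite set. -/
def fVar {X : Type*} (A : Finset X) (g : X → ℝ) : ℝ :=
  fAvg A fun x => (g x - fAvg A g) ^ 2

/-- Empirical variance of `g x`, `x` ranging over a multiset. -/
def msVar {X : Type*} (T : Multiset X) (g : X → ℝ) : ℝ :=
  msAvg T fun x => (g x - msAvg T g) ^ 2

/-- The `k`-th smallest element (1-indexed) of a multiset of reals. -/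
def kthSmallest (s : Multiset ℝ) (k : ℕ) : ℝ :=
  (s.sort (· ≤ ·)).getD (k - 1) 0

/-- Median (the `⌈m/2⌉`-th smallest element) of a multiset of reals of size `m`. -/
def msMedian (s : Multiset ℝ) : ℝ :=
  kthSmallest s ((Multiset.card s + 1) / 2)

/-- Conditions (L.1)–(L.2) of stability, with respect to mean `μ`, covariance `Sig`
(with psd square root `sqrtSig`) and parameter `ε`. -/
def SatisfiesL12 {d : ℕ} (μ : Fin d → ℝ) (Sig sqrtSig : Matrix (Fin d) (Fin d) ℝ) (ε : ℝ)
    (A : Finset (Fin d → ℝ)) : Prop :=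
  ∀ A' ⊆ A, (1 - ε) * (A.card : ℝ) ≤ (A'.card : ℝ) →
    (∀ v : Fin d → ℝ,
        |fAvg A' (fun x => v ⬝ᵥ (x - μ))| ≤ 0.1 * Real.sqrt (v ⬝ᵥ Sig.mulVec v)) ∧
    (∀ U : Matrix (Fin d) (Fin d) ℝ, U.IsSymm →
        |Matrix.trace ((fAvg A' (fun x => Matrix.vecMulVec (x - μ) (x - μ)) - Sig) * U)|
          ≤ 0.1 * frobNorm (sqrtSig * U * sqrtSig))

/-- The positive semidefinite square root of a positive semidefinite matrix, as
`Matrix.PosSemidef.sqrt` was defined in Mathlib (December 2024). -/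
def posSemidefSqrt {d : ℕ} {A : Matrix (Fin d) (Fin d) ℝ} (hA : A.PosSemidef) :
    Matrix (Fin d) (Fin d) ℝ :=
  (hA.1.eigenvectorUnitary : Matrix (Fin d) (Fin d) ℝ) *
    diagonal ((↑) ∘ (Real.sqrt ·) ∘ hA.1.eigenvalues) *
    (star hA.1.eigenvectorUnitary : Matrix (Fin d) (Fin d) ℝ)

end ListDecCov

namespace ListDecCov

section AuxLemmas

variable {d : ℕ}

lemma vecNorm_nonneg (v : Fin d → ℝ) : 0 ≤ vecNorm v := Real.sqrt_nonneg _

lemma sq_vecNorm (v : Fin d → ℝ) : vecNorm v ^ 2 = ∑ i, v i ^ 2 :=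
  Real.sq_sqrt (by positivity)

lemma vecNorm_eq_norm (v : Fin d → ℝ) :
    vecNorm v = ‖(WithLp.equiv 2 (Fin d → ℝ)).symm v‖ := by
  rw [vecNorm, EuclideanSpace.norm_eq]
  congr 1
  refine Finset.sum_congr rfl fun i _ => ?_
  rw [Real.norm_eq_abs, sq_abs]
  rfl

lemma dotProduct_self_eq (v : Fin d → ℝ) : v ⬝ᵥ v = vecNorm v ^ 2 := by
  rw [sq_vecNorm, dotProduct]
  exact Finset.sum_congr rfl fun i _ => (sq (v i)).symm ▸ (pow_two (v i)).symm ▸ rfl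

lemma abs_dotProduct_le (v w : Fin d → ℝ) : |v ⬝ᵥ w| ≤ vecNorm v * vecNorm w := by
  have h := Finset.sum_mul_sq_le_sq_mul_sq Finset.univ v w
  rw [← Real.sqrt_sq_eq_abs, vecNorm, vecNorm, ← Real.sqrt_mul (by positivity)]
  exact Real.sqrt_le_sqrt h

section OpNormLemmas

open scoped Matrix.Norms.L2Operator

lemma opNorm_eq_norm (M : Matrix (Fin d) (Fin d) ℝ) : opNorm M = ‖M‖ := rfl

lemma opNorm_nonneg (M : Matrix (Fin d) (Fin d) ℝ) : 0 ≤ opNorm M := by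
  rw [opNorm_eq_norm]; exact norm_nonneg M

lemma conjT_eq_transpose (M : Matrix (Fin d) (Fin d) ℝ) : Mᴴ = Mᵀ := by
  ext i j; simp [Matrix.conjTranspose_apply]

lemma opNorm_transpose (M : Matrix (Fin d) (Fin d) ℝ) : opNorm Mᵀ = opNorm M := by
  rw [opNorm_eq_norm, opNorm_eq_norm, ← conjT_eq_transpose, Matrix.l2_opNorm_conjTranspose]

lemma opNorm_mul_le (A B : Matrix (Fin d) (Fin d) ℝ) :
    opNorm (A * B) ≤ opNorm A * opNorm B := by
  rw [opNorm_eq_norm, opNorm_eq_norm, opNorm_eq_norm]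
  exact Matrix.l2_opNorm_mul A B

lemma opNorm_mul_transpose_self (A : Matrix (Fin d) (Fin d) ℝ) :
    opNorm (A * Aᵀ) = opNorm A ^ 2 := by
  rw [opNorm_eq_norm, opNorm_eq_norm, ← conjT_eq_transpose]
  have h := Matrix.l2_opNorm_conjTranspose_mul_self Aᴴ
  rw [Matrix.conjTranspose_conjTranspose, Matrix.l2_opNorm_conjTranspose] at h
  rw [h, sq]

lemma vecNorm_mulVec_le (A : Matrix (Fin d) (Fin d) ℝ) (v : Fin d → ℝ) :
    vecNorm (A *ᵥ v) ≤ opNorm A * vecNorm v := by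
  rw [vecNorm_eq_norm, vecNorm_eq_norm, opNorm_eq_norm]
  exact Matrix.l2_opNorm_mulVec A ((WithLp.equiv 2 _).symm v)

lemma abs_dot_mulVec_le (A : Matrix (Fin d) (Fin d) ℝ) (u v : Fin d → ℝ) :
    |u ⬝ᵥ A *ᵥ v| ≤ opNorm A * vecNorm u * vecNorm v := by
  calc |u ⬝ᵥ A *ᵥ v| ≤ vecNorm u * vecNorm (A *ᵥ v) := abs_dotProduct_le _ _
    _ ≤ vecNorm u * (opNorm A * vecNorm v) := by
        exact mul_le_mul_of_nonneg_left (vecNorm_mulVec_le A v) (vecNorm_nonneg u)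
    _ = opNorm A * vecNorm u * vecNorm v := by ring

lemma opNorm_le_of_bilinear {A : Matrix (Fin d) (Fin d) ℝ} {c : ℝ} (hc : 0 ≤ c)
    (h : ∀ u v, |u ⬝ᵥ A *ᵥ v| ≤ c * vecNorm u * vecNorm v) : opNorm A ≤ c := by
  rw [opNorm]
  refine ContinuousLinearMap.opNorm_le_bound _ hc fun x => ?_
  set v : Fin d → ℝ := WithLp.equiv 2 _ x with hv
  have hx : x = (WithLp.equiv 2 (Fin d → ℝ)).symm v := rfl
  rw [hx, show toEuclideanCLM (𝕜 := ℝ) A ((WithLp.equiv 2 (Fin d → ℝ)).symm v) =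
      (WithLp.equiv 2 (Fin d → ℝ)).symm (Matrix.toLin' A v) from rfl, ← vecNorm_eq_norm, ← vecNorm_eq_norm,
    Matrix.toLin'_apply]
  set u := A *ᵥ v with hu
  rcases eq_or_lt_of_le (vecNorm_nonneg u) with h0 | h0
  · rw [← h0]; exact mul_nonneg hc (vecNorm_nonneg v)
  · have h1 : vecNorm u ^ 2 = u ⬝ᵥ A *ᵥ v := by rw [← hu, dotProduct_self_eq]
    have h2 : u ⬝ᵥ A *ᵥ v ≤ c * vecNorm u * vecNorm v := (abs_le.mp (h u v)).2
    nlinarith [vecNorm_nonneg v]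


end OpNormLemmas

section FrobLemmas

attribute [local instance] Matrix.frobeniusSeminormedAddCommGroup

lemma frobNorm_eq_norm (M : Matrix (Fin d) (Fin d) ℝ) : frobNorm M = ‖M‖ := by
  rw [frobNorm, Matrix.frobenius_norm_def, Real.sqrt_eq_rpow]
  congr 1
  refine Finset.sum_congr rfl fun i _ => Finset.sum_congr rfl fun j _ => ?_
  rw [Real.rpow_two, Real.norm_eq_abs, sq_abs]

lemma frobNorm_nonneg (M : Matrix (Fin d) (Fin d) ℝ) : 0 ≤ frobNorm M := Real.sqrt_nonneg _

lemma sq_frobNorm (M : Matrix (Fin d) (Fin d) ℝ) : frobNorm M ^ 2 = ∑ i, ∑ j, (M i j) ^ 2 :=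
  Real.sq_sqrt (by positivity)

lemma frobNorm_add_le (A B : Matrix (Fin d) (Fin d) ℝ) :
    frobNorm (A + B) ≤ frobNorm A + frobNorm B := by
  rw [frobNorm_eq_norm, frobNorm_eq_norm, frobNorm_eq_norm]; exact norm_add_le A B

lemma frobNorm_sub_le (A B : Matrix (Fin d) (Fin d) ℝ) :
    frobNorm (A - B) ≤ frobNorm A + frobNorm B := by
  rw [frobNorm_eq_norm, frobNorm_eq_norm, frobNorm_eq_norm]; exact norm_sub_le A B

end FrobLemmas

lemma frobNorm_transpose (M : Matrix (Fin d) (Fin d) ℝ) : frobNorm Mᵀ = frobNorm M := by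
  rw [frobNorm, frobNorm]
  congr 1
  exact Finset.sum_comm

lemma frobNorm_diagonal (v : Fin d → ℝ) : frobNorm (Matrix.diagonal v) = vecNorm v := by
  rw [frobNorm, vecNorm]
  congr 1
  refine Finset.sum_congr rfl fun i _ => ?_
  have : ∀ j, (Matrix.diagonal v i j) ^ 2 = if j = i then v i ^ 2 else 0 := by
    intro j
    rcases eq_or_ne j i with h | h
    · subst h; simp [Matrix.diagonal_apply_eq]
    · simp [Matrix.diagonal_apply_ne' v h, h]
  simp [this]

lemma frobNorm_mul_le_opNorm_mul (A B : Matrix (Fin d) (Fin d) ℝ) :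
    frobNorm (A * B) ≤ opNorm A * frobNorm B := by
  have h2 : ∀ j, ∑ i, ((A * B) i j) ^ 2 ≤ opNorm A ^ 2 * ∑ i, (B i j) ^ 2 := by
    intro j
    have h := vecNorm_mulVec_le A (fun k => B k j)
    have h' : vecNorm (A *ᵥ fun k => B k j) ^ 2 ≤
        (opNorm A * vecNorm fun k => B k j) ^ 2 :=
      pow_le_pow_left₀ (vecNorm_nonneg _) h 2
    rw [sq_vecNorm, mul_pow, sq_vecNorm] at h'
    have hcol : ∀ i, (A *ᵥ fun k => B k j) i = (A * B) i j := by
      intro i; simp [Matrix.mulVec, Matrix.mul_apply, dotProduct]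
    calc ∑ i, ((A * B) i j) ^ 2 = ∑ i, ((A *ᵥ fun k => B k j) i) ^ 2 := by
          refine Finset.sum_congr rfl fun i _ => ?_; rw [hcol]
      _ ≤ opNorm A ^ 2 * ∑ i, (B i j) ^ 2 := h'
  have hsum : ∑ j, ∑ i, ((A * B) i j) ^ 2 ≤ opNorm A ^ 2 * ∑ j, ∑ i, (B i j) ^ 2 := by
    rw [Finset.mul_sum]
    exact Finset.sum_le_sum fun j _ => h2 j
  rw [frobNorm, Finset.sum_comm]
  calc Real.sqrt (∑ j, ∑ i, ((A * B) i j) ^ 2)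
      ≤ Real.sqrt (opNorm A ^ 2 * ∑ j, ∑ i, (B i j) ^ 2) := Real.sqrt_le_sqrt hsum
    _ = opNorm A * frobNorm B := by
        rw [Real.sqrt_mul (sq_nonneg _), Real.sqrt_sq (opNorm_nonneg A), frobNorm,
          Finset.sum_comm]

lemma frobNorm_mul_le_mul_opNorm (A B : Matrix (Fin d) (Fin d) ℝ) :
    frobNorm (A * B) ≤ frobNorm A * opNorm B := by
  calc frobNorm (A * B) = frobNorm ((A * B)ᵀ) := (frobNorm_transpose _).symm
    _ = frobNorm (Bᵀ * Aᵀ) := by rw [Matrix.transpose_mul]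
    _ ≤ opNorm Bᵀ * frobNorm Aᵀ := frobNorm_mul_le_opNorm_mul _ _
    _ = frobNorm A * opNorm B := by rw [opNorm_transpose, frobNorm_transpose]; ring

lemma sq_frobNorm_eq_trace (K : Matrix (Fin d) (Fin d) ℝ) :
    frobNorm K ^ 2 = Matrix.trace (Kᵀ * K) := by
  rw [sq_frobNorm, Matrix.trace]
  rw [Finset.sum_comm]
  refine Finset.sum_congr rfl fun j _ => ?_
  simp [Matrix.diag, Matrix.mul_apply, sq]


lemma psd_quad_nonneg {X : Matrix (Fin d) (Fin d) ℝ} (hX : X.PosSemidef) (x : Fin d → ℝ) :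
    0 ≤ x ⬝ᵥ X *ᵥ x := by simpa using hX.dotProduct_mulVec_nonneg x

lemma conj_mul_self_aux (U D : Matrix (Fin d) (Fin d) ℝ) (hUU : star U * U = 1) :
    U * D * star U * (U * D * star U) = U * (D * D) * star U := by
  rw [show U * D * star U * (U * D * star U) = U * D * (star U * U) * D * star U by
    noncomm_ring, hUU]
  noncomm_ring

lemma posSemidefSqrt_mul_self {A : Matrix (Fin d) (Fin d) ℝ} (hA : A.PosSemidef) :
    posSemidefSqrt hA * posSemidefSqrt hA = A := by
  have hUU : star (hA.1.eigenvectorUnitary : Matrix (Fin d) (Fin d) ℝ) *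
      (hA.1.eigenvectorUnitary : Matrix (Fin d) (Fin d) ℝ) = 1 :=
    Matrix.mem_unitaryGroup_iff'.mp hA.1.eigenvectorUnitary.2
  unfold posSemidefSqrt
  rw [conj_mul_self_aux _ _ hUU, diagonal_mul_diagonal]
  conv_rhs => rw [hA.1.spectral_theorem, Unitary.conjStarAlgAut_apply]
  congr 3
  funext i
  simp [Real.mul_self_sqrt (hA.eigenvalues_nonneg i)]

lemma posSemidefSqrt_transpose {A : Matrix (Fin d) (Fin d) ℝ} (hA : A.PosSemidef) :
    (posSemidefSqrt hA)ᵀ = posSemidefSqrt hA := by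
  have hsU : star (hA.1.eigenvectorUnitary : Matrix (Fin d) (Fin d) ℝ) =
      (hA.1.eigenvectorUnitary : Matrix (Fin d) (Fin d) ℝ)ᵀ := by
    rw [Matrix.star_eq_conjTranspose, conjT_eq_transpose]
  unfold posSemidefSqrt
  rw [hsU, transpose_mul, transpose_mul, diagonal_transpose, transpose_transpose,
    Matrix.mul_assoc]

lemma dot_mul_mulVec (A B : Matrix (Fin d) (Fin d) ℝ) (u v : Fin d → ℝ) :
    u ⬝ᵥ (A * B) *ᵥ v = (Aᵀ *ᵥ u) ⬝ᵥ (B *ᵥ v) := by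
  rw [← Matrix.mulVec_mulVec, Matrix.dotProduct_mulVec u A, ← Matrix.mulVec_transpose]

lemma psd_cauchySchwarz {X : Matrix (Fin d) (Fin d) ℝ} (hX : X.PosSemidef) (x y : Fin d → ℝ) :
    |x ⬝ᵥ X *ᵥ y| ≤ Real.sqrt (x ⬝ᵥ X *ᵥ x) * Real.sqrt (y ⬝ᵥ X *ᵥ y) := by
  have hBB : posSemidefSqrt hX * posSemidefSqrt hX = X := posSemidefSqrt_mul_self hX
  have hBsymm : (posSemidefSqrt hX)ᵀ = posSemidefSqrt hX := by
    exact posSemidefSqrt_transpose hX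
  have key : ∀ a b : Fin d → ℝ, a ⬝ᵥ X *ᵥ b = (posSemidefSqrt hX *ᵥ a) ⬝ᵥ (posSemidefSqrt hX *ᵥ b) := by
    intro a b
    have h := dot_mul_mulVec (posSemidefSqrt hX) (posSemidefSqrt hX) a b
    rw [hBsymm] at h
    rw [hBB] at h
    exact h
  have h1 : Real.sqrt (x ⬝ᵥ X *ᵥ x) = vecNorm (posSemidefSqrt hX *ᵥ x) := by
    rw [key, dotProduct_self_eq, Real.sqrt_sq (vecNorm_nonneg _)]
  have h2 : Real.sqrt (y ⬝ᵥ X *ᵥ y) = vecNorm (posSemidefSqrt hX *ᵥ y) := by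
    rw [key, dotProduct_self_eq, Real.sqrt_sq (vecNorm_nonneg _)]
  rw [key, h1, h2]
  exact abs_dotProduct_le _ _

lemma sqrt_two_cs {a b c e : ℝ} (ha : 0 ≤ a) (hb : 0 ≤ b) (hc : 0 ≤ c) (he : 0 ≤ e) :
    Real.sqrt a * Real.sqrt b + Real.sqrt c * Real.sqrt e ≤
      Real.sqrt (a + c) * Real.sqrt (b + e) := by
  have hmul : Real.sqrt (a + c) * Real.sqrt (b + e) = Real.sqrt ((a + c) * (b + e)) :=
    (Real.sqrt_mul (by linarith) _).symm
  rw [hmul]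
  rw [Real.le_sqrt (by positivity) (mul_nonneg (by linarith) (by linarith))]
  nlinarith [Real.sq_sqrt ha, Real.sq_sqrt hb, Real.sq_sqrt hc, Real.sq_sqrt he,
    Real.sqrt_nonneg a, Real.sqrt_nonneg b, Real.sqrt_nonneg c, Real.sqrt_nonneg e,
    sq_nonneg (Real.sqrt a * Real.sqrt e - Real.sqrt c * Real.sqrt b)]

lemma abs_dot_sub_mulVec {X₁ X₂ : Matrix (Fin d) (Fin d) ℝ}
    (h1 : X₁.PosSemidef) (h2 : X₂.PosSemidef) (x y : Fin d → ℝ) :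
    |x ⬝ᵥ (X₁ - X₂) *ᵥ y| ≤
      Real.sqrt (x ⬝ᵥ (X₁ + X₂) *ᵥ x) * Real.sqrt (y ⬝ᵥ (X₁ + X₂) *ᵥ y) := by
  have esub : ∀ a b : Fin d → ℝ, a ⬝ᵥ (X₁ - X₂) *ᵥ b = a ⬝ᵥ X₁ *ᵥ b - a ⬝ᵥ X₂ *ᵥ b := by
    intro a b; rw [Matrix.sub_mulVec, dotProduct_sub]
  have eadd : ∀ a b : Fin d → ℝ, a ⬝ᵥ (X₁ + X₂) *ᵥ b = a ⬝ᵥ X₁ *ᵥ b + a ⬝ᵥ X₂ *ᵥ b := by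
    intro a b; rw [Matrix.add_mulVec, dotProduct_add]
  calc |x ⬝ᵥ (X₁ - X₂) *ᵥ y| ≤ |x ⬝ᵥ X₁ *ᵥ y| + |x ⬝ᵥ X₂ *ᵥ y| := by
        rw [esub]; exact abs_sub _ _
    _ ≤ Real.sqrt (x ⬝ᵥ X₁ *ᵥ x) * Real.sqrt (y ⬝ᵥ X₁ *ᵥ y) +
        Real.sqrt (x ⬝ᵥ X₂ *ᵥ x) * Real.sqrt (y ⬝ᵥ X₂ *ᵥ y) :=
      add_le_add (psd_cauchySchwarz h1 x y) (psd_cauchySchwarz h2 x y)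
    _ ≤ Real.sqrt (x ⬝ᵥ X₁ *ᵥ x + x ⬝ᵥ X₂ *ᵥ x) *
        Real.sqrt (y ⬝ᵥ X₁ *ᵥ y + y ⬝ᵥ X₂ *ᵥ y) :=
      sqrt_two_cs (psd_quad_nonneg h1 x) (psd_quad_nonneg h1 y)
        (psd_quad_nonneg h2 x) (psd_quad_nonneg h2 y)
    _ = _ := by rw [eadd, eadd]

lemma quad_le_opNorm (A : Matrix (Fin d) (Fin d) ℝ) (x : Fin d → ℝ) :
    x ⬝ᵥ A *ᵥ x ≤ opNorm A * vecNorm x ^ 2 := by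
  calc x ⬝ᵥ A *ᵥ x ≤ |x ⬝ᵥ A *ᵥ x| := le_abs_self _
    _ ≤ opNorm A * vecNorm x * vecNorm x := abs_dot_mulVec_le A x x
    _ = opNorm A * vecNorm x ^ 2 := by ring

lemma psd_opNorm_le {W : Matrix (Fin d) (Fin d) ℝ} (hW : W.PosSemidef) {c : ℝ} (hc : 0 ≤ c)
    (h : ∀ u, u ⬝ᵥ W *ᵥ u ≤ c * vecNorm u ^ 2) : opNorm W ≤ c := by
  refine opNorm_le_of_bilinear hc fun u v => ?_
  calc |u ⬝ᵥ W *ᵥ v| ≤ Real.sqrt (u ⬝ᵥ W *ᵥ u) * Real.sqrt (v ⬝ᵥ W *ᵥ v) :=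
        psd_cauchySchwarz hW u v
    _ ≤ Real.sqrt (c * vecNorm u ^ 2) * Real.sqrt (c * vecNorm v ^ 2) := by
        apply mul_le_mul (Real.sqrt_le_sqrt (h u)) (Real.sqrt_le_sqrt (h v))
          (Real.sqrt_nonneg _) (Real.sqrt_nonneg _)
    _ = Real.sqrt c * Real.sqrt c * (vecNorm u * vecNorm v) := by
        rw [Real.sqrt_mul hc, Real.sqrt_mul hc, Real.sqrt_sq (vecNorm_nonneg _),
          Real.sqrt_sq (vecNorm_nonneg _)]
        ring
    _ = c * vecNorm u * vecNorm v := by rw [Real.mul_self_sqrt hc]; ring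

lemma vecNorm_smul (c : ℝ) (v : Fin d → ℝ) : vecNorm (c • v) = |c| * vecNorm v := by
  rw [vecNorm_eq_norm, vecNorm_eq_norm]
  have : (WithLp.equiv 2 (Fin d → ℝ)).symm (c • v) =
      c • (WithLp.equiv 2 (Fin d → ℝ)).symm v := rfl
  rw [this, norm_smul, Real.norm_eq_abs]

lemma eig_le_opNorm {A : Matrix (Fin d) (Fin d) ℝ} (hA : A.IsHermitian) (i : Fin d) :
    hA.eigenvalues i ≤ opNorm A := by
  set v : Fin d → ℝ := ⇑(hA.eigenvectorBasis i) with hv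
  have hnorm : vecNorm v = 1 := by
    rw [vecNorm_eq_norm]
    exact hA.eigenvectorBasis.orthonormal.1 i
  have hmv : A *ᵥ v = hA.eigenvalues i • v := hA.mulVec_eigenvectorBasis i
  have h1 : vecNorm (A *ᵥ v) = |hA.eigenvalues i| := by
    rw [hmv, vecNorm_smul, hnorm, mul_one]
  have h2 := vecNorm_mulVec_le A v
  rw [h1, hnorm, mul_one] at h2
  exact (le_abs_self _).trans h2

lemma trace_eq_sum_eigenvalues {A : Matrix (Fin d) (Fin d) ℝ} (hA : A.IsHermitian) :
    Matrix.trace A = ∑ i, hA.eigenvalues i := by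
  have hU : (star (hA.eigenvectorUnitary : Matrix (Fin d) (Fin d) ℝ)) *
      (hA.eigenvectorUnitary : Matrix (Fin d) (Fin d) ℝ) = 1 :=
    Matrix.mem_unitaryGroup_iff'.mp (hA.eigenvectorUnitary).2
  calc Matrix.trace A
      = Matrix.trace ((hA.eigenvectorUnitary : Matrix (Fin d) (Fin d) ℝ) *
          Matrix.diagonal (RCLike.ofReal ∘ hA.eigenvalues) *
          (star (hA.eigenvectorUnitary : Matrix (Fin d) (Fin d) ℝ))) := by
        conv_lhs => rw [hA.spectral_theorem, Unitary.conjStarAlgAut_apply]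
    _ = Matrix.trace ((star (hA.eigenvectorUnitary : Matrix (Fin d) (Fin d) ℝ)) *
          ((hA.eigenvectorUnitary : Matrix (Fin d) (Fin d) ℝ) *
            Matrix.diagonal (RCLike.ofReal ∘ hA.eigenvalues))) := by
        rw [Matrix.trace_mul_comm]
    _ = Matrix.trace (Matrix.diagonal (RCLike.ofReal ∘ hA.eigenvalues)) := by
        rw [← Matrix.mul_assoc, hU, Matrix.one_mul]
    _ = ∑ i, hA.eigenvalues i := by
        rw [Matrix.trace_diagonal]
        exact Finset.sum_congr rfl fun i _ => rfl

lemma frobNorm_le_sqrt_rank_mul_opNorm (K : Matrix (Fin d) (Fin d) ℝ) :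
    frobNorm K ≤ Real.sqrt (K.rank) * opNorm K := by
  classical
  have hA : (Kᵀ * K).PosSemidef := by
    have := Matrix.posSemidef_conjTranspose_mul_self K
    rwa [conjT_eq_transpose] at this
  have herm := hA.1
  have htr : Matrix.trace (Kᵀ * K) = ∑ i, herm.eigenvalues i := trace_eq_sum_eigenvalues herm
  have hopA : opNorm (Kᵀ * K) = opNorm K ^ 2 := by
    have h := opNorm_mul_transpose_self Kᵀ
    rwa [Matrix.transpose_transpose, opNorm_transpose] at h
  have hrank : (Kᵀ * K).rank = K.rank := by
    have := Matrix.rank_conjTranspose_mul_self K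
    rwa [conjT_eq_transpose] at this
  -- sum of eigenvalues ≤ rank * opNorm
  have hcard : (Finset.univ.filter fun i => herm.eigenvalues i ≠ 0).card = (Kᵀ * K).rank := by
    rw [herm.rank_eq_card_non_zero_eigs, Fintype.card_subtype]
  have hsum : ∑ i, herm.eigenvalues i ≤ (K.rank : ℝ) * opNorm K ^ 2 := by
    have h1 : ∑ i, herm.eigenvalues i =
        ∑ i ∈ Finset.univ.filter fun i => herm.eigenvalues i ≠ 0, herm.eigenvalues i := by
      rw [Finset.sum_filter_ne_zero]
    have h2 : ∑ i ∈ Finset.univ.filter (fun i => herm.eigenvalues i ≠ 0), herm.eigenvalues i ≤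
        ∑ _i ∈ Finset.univ.filter (fun i => herm.eigenvalues i ≠ 0), opNorm (Kᵀ * K) :=
      Finset.sum_le_sum fun i _ => eig_le_opNorm herm i
    rw [Finset.sum_const, hcard, hrank, nsmul_eq_mul, hopA] at h2
    rw [h1]; exact h2
  have hfrob : frobNorm K ^ 2 ≤ (K.rank : ℝ) * opNorm K ^ 2 := by
    rw [sq_frobNorm_eq_trace, htr]; exact hsum
  calc frobNorm K = Real.sqrt (frobNorm K ^ 2) := (Real.sqrt_sq (frobNorm_nonneg K)).symm
    _ ≤ Real.sqrt ((K.rank : ℝ) * opNorm K ^ 2) := Real.sqrt_le_sqrt hfrob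
    _ = Real.sqrt (K.rank) * opNorm K := by
        rw [Real.sqrt_mul (Nat.cast_nonneg _), Real.sqrt_sq (opNorm_nonneg K)]

lemma tri_dot (A B C : Matrix (Fin d) (Fin d) ℝ) (u v : Fin d → ℝ) :
    u ⬝ᵥ ((A * B * Cᵀ) *ᵥ v) = (Aᵀ *ᵥ u) ⬝ᵥ (B *ᵥ (Cᵀ *ᵥ v)) := by
  rw [Matrix.mul_assoc, dot_mul_mulVec, ← Matrix.mulVec_mulVec]

lemma conj_quad (A B : Matrix (Fin d) (Fin d) ℝ) (u : Fin d → ℝ) :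
    u ⬝ᵥ ((A * B * Aᵀ) *ᵥ u) = (Aᵀ *ᵥ u) ⬝ᵥ (B *ᵥ (Aᵀ *ᵥ u)) :=
  tri_dot A B A u u

set_option maxHeartbeats 1000000 in
lemma core_bound {ρ : ℝ} (hρ : 1 ≤ ρ) (M X₁ X₂ : Matrix (Fin d) (Fin d) ℝ)
    (h1 : X₁.PosSemidef) (h2 : X₂.PosSemidef)
    (hb₁ : frobNorm (1 - X₁) ≤ ρ) (hb₂ : frobNorm (1 - X₂) ≤ ρ) :
    frobNorm (M * X₁ * Mᵀ - M * X₂ * Mᵀ) ≤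
      20 * ρ * max (opNorm (M * X₁ * Mᵀ)) (opNorm (M * X₂ * Mᵀ)) := by
  classical
  set N : ℝ := max (opNorm (M * X₁ * Mᵀ)) (opNorm (M * X₂ * Mᵀ)) with hNdef
  have hN : 0 ≤ N := le_trans (opNorm_nonneg _) (le_max_left _ _)
  have hρ0 : (0:ℝ) ≤ ρ := le_trans zero_le_one hρ
  have h2N : (0:ℝ) ≤ 2 * N := by linarith
  have hS : (X₁ + X₂).PosSemidef := h1.add h2
  set μ : Fin d → ℝ := hS.1.eigenvalues with hμdef
  have hμ0 : ∀ i, 0 ≤ μ i := fun i => hS.eigenvalues_nonneg i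
  set U : Matrix (Fin d) (Fin d) ℝ :=
    (hS.1.eigenvectorUnitary : Matrix (Fin d) (Fin d) ℝ) with hUdef
  have hUU : star U * U = 1 := Matrix.mem_unitaryGroup_iff'.mp hS.1.eigenvectorUnitary.2
  have hUU' : U * star U = 1 := Matrix.mem_unitaryGroup_iff.mp hS.1.eigenvectorUnitary.2
  set Con : (Fin d → ℝ) → Matrix (Fin d) (Fin d) ℝ :=
    fun w => U * Matrix.diagonal w * star U with hConDef
  have hCon_mul : ∀ w w', Con w * Con w' = Con (w * w') := by
    intro w w'
    have hdd : Matrix.diagonal w * Matrix.diagonal w' = Matrix.diagonal (w * w') := by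
      rw [Matrix.diagonal_mul_diagonal]
      rfl
    show U * Matrix.diagonal w * star U * (U * Matrix.diagonal w' * star U) =
      U * Matrix.diagonal (w * w') * star U
    rw [← hdd]
    rw [show U * Matrix.diagonal w * star U * (U * Matrix.diagonal w' * star U)
        = U * Matrix.diagonal w * (star U * U) * Matrix.diagonal w' * star U by
      noncomm_ring]
    rw [hUU, Matrix.mul_one]
    noncomm_ring
  have hCon_sub : ∀ w w', Con w - Con w' = Con (w - w') := by
    intro w w'
    have hdd : Matrix.diagonal w - Matrix.diagonal w' = Matrix.diagonal (w - w') :=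
      (Matrix.diagonal_sub w w').trans rfl
    show U * Matrix.diagonal w * star U - U * Matrix.diagonal w' * star U =
      U * Matrix.diagonal (w - w') * star U
    rw [← hdd]
    noncomm_ring
  have hCon_add : ∀ w w', Con w + Con w' = Con (w + w') := by
    intro w w'
    have hdd : Matrix.diagonal w + Matrix.diagonal w' = Matrix.diagonal (w + w') :=
      (Matrix.diagonal_add w w').trans rfl
    show U * Matrix.diagonal w * star U + U * Matrix.diagonal w' * star U =
      U * Matrix.diagonal (w + w') * star U
    rw [← hdd]
    noncomm_ring
  have hCon_one : Con (1 : Fin d → ℝ) = 1 := by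
    show U * Matrix.diagonal (fun _ => 1) * star U = 1
    rw [Matrix.diagonal_one, Matrix.mul_one, hUU']
  have hCon_S : X₁ + X₂ = Con μ := by
    have h := hS.1.spectral_theorem
    have he : (RCLike.ofReal ∘ hS.1.eigenvalues : Fin d → ℝ) = μ := by
      rw [hμdef]
      funext i
      simp [RCLike.ofReal_real_eq_id]
    rw [he] at h
    exact h
  have hCon_T : ∀ w, (Con w)ᵀ = Con w := by
    intro w
    have hsU : star U = Uᵀ := by
      rw [Matrix.star_eq_conjTranspose, conjT_eq_transpose]
    show (U * Matrix.diagonal w * star U)ᵀ = U * Matrix.diagonal w * star U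
    rw [Matrix.transpose_mul, Matrix.transpose_mul, Matrix.diagonal_transpose, hsU,
      Matrix.transpose_transpose]
    noncomm_ring
  have hCon_psd : ∀ w : Fin d → ℝ, (∀ i, 0 ≤ w i) → (Con w).PosSemidef := by
    intro w hw
    have hdiag : (Matrix.diagonal w).PosSemidef := Matrix.PosSemidef.diagonal hw
    have := hdiag.mul_mul_conjTranspose_same U
    rwa [← Matrix.star_eq_conjTranspose] at this
  -- quadratic form of M S Mᵀ
  have hMSM_quad : ∀ u : Fin d → ℝ,
      u ⬝ᵥ ((M * (X₁ + X₂) * Mᵀ) *ᵥ u) ≤ 2 * N * vecNorm u ^ 2 := by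
    intro u
    have e : M * (X₁ + X₂) * Mᵀ = M * X₁ * Mᵀ + M * X₂ * Mᵀ := by noncomm_ring
    rw [e, Matrix.add_mulVec, dotProduct_add]
    have b1 : u ⬝ᵥ (M * X₁ * Mᵀ) *ᵥ u ≤ N * vecNorm u ^ 2 :=
      le_trans (quad_le_opNorm _ u)
        (mul_le_mul_of_nonneg_right (le_max_left _ _) (by positivity))
    have b2 : u ⬝ᵥ (M * X₂ * Mᵀ) *ᵥ u ≤ N * vecNorm u ^ 2 :=
      le_trans (quad_le_opNorm _ u)
        (mul_le_mul_of_nonneg_right (le_max_right _ _) (by positivity))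
    linarith
  -- key quadratic bound for conjugations
  have hquad : ∀ w : Fin d → ℝ, (∀ i, w i * μ i * w i ≤ μ i) →
      ∀ u, ((M * Con w)ᵀ *ᵥ u) ⬝ᵥ ((X₁ + X₂) *ᵥ ((M * Con w)ᵀ *ᵥ u)) ≤
        2 * N * vecNorm u ^ 2 := by
    intro w hw u
    rw [← conj_quad]
    have e : (M * Con w) * (X₁ + X₂) * (M * Con w)ᵀ = M * Con (w * μ * w) * Mᵀ := by
      rw [Matrix.transpose_mul, hCon_T, hCon_S, ← hCon_mul, ← hCon_mul]
      noncomm_ring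
    rw [e]
    have hpsd : (M * (X₁ + X₂) * Mᵀ - M * Con (w * μ * w) * Mᵀ).PosSemidef := by
      have e2 : M * (X₁ + X₂) * Mᵀ - M * Con (w * μ * w) * Mᵀ =
          M * Con (μ - w * μ * w) * Mᵀ := by
        rw [hCon_S, ← hCon_sub]
        noncomm_ring
      rw [e2]
      have hps : (Con (μ - w * μ * w)).PosSemidef := by
        refine hCon_psd _ fun i => ?_
        have := hw i
        simp only [Pi.sub_apply, Pi.mul_apply]
        linarith
      have := hps.mul_mul_conjTranspose_same M
      rwa [conjT_eq_transpose] at this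
    have hnn := psd_quad_nonneg hpsd u
    rw [Matrix.sub_mulVec, dotProduct_sub] at hnn
    have hle : u ⬝ᵥ ((M * Con (w * μ * w) * Mᵀ) *ᵥ u) ≤
        u ⬝ᵥ ((M * (X₁ + X₂) * Mᵀ) *ᵥ u) := by linarith
    exact le_trans hle (hMSM_quad u)
  -- operator norm bound helper
  have hop : ∀ A B : Matrix (Fin d) (Fin d) ℝ,
      (∀ u, (Aᵀ *ᵥ u) ⬝ᵥ ((X₁ + X₂) *ᵥ (Aᵀ *ᵥ u)) ≤ 2 * N * vecNorm u ^ 2) →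
      (∀ v, (Bᵀ *ᵥ v) ⬝ᵥ ((X₁ + X₂) *ᵥ (Bᵀ *ᵥ v)) ≤ 2 * N * vecNorm v ^ 2) →
      opNorm (A * (X₁ - X₂) * Bᵀ) ≤ 2 * N := by
    intro A B hA hB
    refine opNorm_le_of_bilinear h2N fun u v => ?_
    rw [tri_dot]
    calc |(Aᵀ *ᵥ u) ⬝ᵥ ((X₁ - X₂) *ᵥ (Bᵀ *ᵥ v))|
        ≤ Real.sqrt ((Aᵀ *ᵥ u) ⬝ᵥ ((X₁ + X₂) *ᵥ (Aᵀ *ᵥ u))) *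
          Real.sqrt ((Bᵀ *ᵥ v) ⬝ᵥ ((X₁ + X₂) *ᵥ (Bᵀ *ᵥ v))) := by
          exact abs_dot_sub_mulVec h1 h2 (Aᵀ *ᵥ u) (Bᵀ *ᵥ v)
      _ ≤ Real.sqrt (2 * N * vecNorm u ^ 2) * Real.sqrt (2 * N * vecNorm v ^ 2) :=
          mul_le_mul (Real.sqrt_le_sqrt (hA u)) (Real.sqrt_le_sqrt (hB v))
            (Real.sqrt_nonneg _) (Real.sqrt_nonneg _)
      _ = Real.sqrt (2 * N) * Real.sqrt (2 * N) * (vecNorm u * vecNorm v) := by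
          rw [Real.sqrt_mul h2N, Real.sqrt_mul h2N, Real.sqrt_sq (vecNorm_nonneg _),
            Real.sqrt_sq (vecNorm_nonneg _)]
          ring
      _ = 2 * N * vecNorm u * vecNorm v := by
          rw [Real.mul_self_sqrt h2N]
          ring
  -- the indicator function
  set χ : Fin d → ℝ := fun i => if μ i < 1 then 1 else 0 with hχdef
  have hχcond : ∀ i, χ i * μ i * χ i ≤ μ i := by
    intro i
    by_cases h : μ i < 1 <;> simp [hχdef, h, hμ0 i]
  have hχ'cond : ∀ i, (1 - χ) i * μ i * (1 - χ) i ≤ μ i := by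
    intro i
    by_cases h : μ i < 1 <;> simp [hχdef, h, Pi.sub_apply, hμ0 i]
  have h1cond : ∀ i, (1 : Fin d → ℝ) i * μ i * (1 : Fin d → ℝ) i ≤ μ i := by
    intro i; simp
  have quadQ := hquad χ hχcond
  have quadP := hquad (1 - χ) hχ'cond
  have quadI : ∀ u, (Mᵀ *ᵥ u) ⬝ᵥ ((X₁ + X₂) *ᵥ (Mᵀ *ᵥ u)) ≤ 2 * N * vecNorm u ^ 2 := by
    have h := hquad 1 h1cond
    have e : M * Con 1 = M := by rw [hCon_one, Matrix.mul_one]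
    rwa [e] at h
  -- operator norm bounds on the three terms
  have hopT1 : opNorm ((M * Con χ) * (X₁ - X₂) * Mᵀ) ≤ 2 * N := hop (M * Con χ) M quadQ quadI
  have hopT2 : opNorm ((M * Con (1 - χ)) * (X₁ - X₂) * (M * Con χ)ᵀ) ≤ 2 * N :=
    hop _ _ quadP quadQ
  -- rank bounds
  have hrkQ : (M * Con χ).rank ≤ Fintype.card {i // χ i ≠ 0} := by
    calc (M * Con χ).rank ≤ (Con χ).rank := Matrix.rank_mul_le_right _ _
      _ = ((U * Matrix.diagonal χ) * star U).rank := by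
            have e : Con χ = (U * Matrix.diagonal χ) * star U := rfl
            rw [e]
      _ ≤ (U * Matrix.diagonal χ).rank := Matrix.rank_mul_le_left _ _
      _ ≤ (Matrix.diagonal χ).rank := Matrix.rank_mul_le_right _ _
      _ = Fintype.card {i // χ i ≠ 0} := Matrix.rank_diagonal χ
  -- cardinality bound
  have hopU : opNorm U ≤ 1 := by
    have h1' : opNorm (U * Uᵀ) = opNorm U ^ 2 := opNorm_mul_transpose_self U
    have hsU : star U = Uᵀ := by rw [Matrix.star_eq_conjTranspose, conjT_eq_transpose]
    rw [← hsU, hUU'] at h1'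
    have hone : opNorm (1 : Matrix (Fin d) (Fin d) ℝ) ≤ 1 := by
      rw [opNorm, _root_.map_one]
      exact ContinuousLinearMap.norm_id_le
    nlinarith [opNorm_nonneg U, sq_nonneg (opNorm U - 1)]
  have hopUs : opNorm (star U) ≤ 1 := by
    rw [Matrix.star_eq_conjTranspose, conjT_eq_transpose, opNorm_transpose]
    exact hopU
  have hfrob_diag_le : ∀ w : Fin d → ℝ, frobNorm (Matrix.diagonal w) ≤ frobNorm (Con w) := by
    intro w
    have e : Matrix.diagonal w = star U * Con w * U := by
      symm
      calc star U * Con w * U = star U * (U * Matrix.diagonal w * star U) * U := rfl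
        _ = (star U * U) * Matrix.diagonal w * (star U * U) := by noncomm_ring
        _ = Matrix.diagonal w := by rw [hUU, Matrix.one_mul, Matrix.mul_one]
    rw [e]
    calc frobNorm (star U * Con w * U)
        ≤ opNorm (star U) * frobNorm (Con w * U) := by
          have h := frobNorm_mul_le_opNorm_mul (star U) (Con w * U)
          rwa [← Matrix.mul_assoc] at h
      _ ≤ opNorm (star U) * (frobNorm (Con w) * opNorm U) :=
          mul_le_mul_of_nonneg_left (frobNorm_mul_le_mul_opNorm _ _) (opNorm_nonneg _)
      _ ≤ 1 * (frobNorm (Con w) * 1) := by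
          have h1'' := frobNorm_nonneg (Con w)
          have h2'' := opNorm_nonneg U
          refine mul_le_mul hopUs ?_ (mul_nonneg h1'' h2'') zero_le_one
          exact mul_le_mul_of_nonneg_left hopU h1''
      _ = frobNorm (Con w) := by ring
  have hvec2μ : vecNorm (fun i => 2 - μ i) ≤ 2 * ρ := by
    have e : Con (fun i => 2 - μ i) = (1 - X₁) + (1 - X₂) := by
      have e1 : (fun i => 2 - μ i) = ((1 : Fin d → ℝ) + 1) - μ := by
        funext i
        show (2:ℝ) - μ i = (1 + 1) - μ i
        norm_num
      rw [e1, ← hCon_sub, ← hCon_add, hCon_one, ← hCon_S]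
      abel
    calc vecNorm (fun i => 2 - μ i) = frobNorm (Matrix.diagonal fun i => 2 - μ i) :=
          (frobNorm_diagonal _).symm
      _ ≤ frobNorm (Con fun i => 2 - μ i) := hfrob_diag_le _
      _ = frobNorm ((1 - X₁) + (1 - X₂)) := by rw [e]
      _ ≤ frobNorm (1 - X₁) + frobNorm (1 - X₂) := frobNorm_add_le _ _
      _ ≤ 2 * ρ := by linarith
  have hcard : Real.sqrt (Fintype.card {i // χ i ≠ 0} : ℝ) ≤ 2 * ρ := by
    have hsum : (Fintype.card {i // χ i ≠ 0} : ℝ) ≤ ∑ i, (2 - μ i) ^ 2 := by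
      rw [Fintype.card_subtype]
      push_cast
      calc ((Finset.univ.filter fun i => χ i ≠ 0).card : ℝ)
          = ∑ _i ∈ Finset.univ.filter fun i => χ i ≠ 0, (1 : ℝ) := by
            rw [Finset.sum_const, nsmul_eq_mul, mul_one]
        _ ≤ ∑ i ∈ Finset.univ.filter fun i => χ i ≠ 0, (2 - μ i) ^ 2 := by
            refine Finset.sum_le_sum fun i hi => ?_
            have hne : χ i ≠ 0 := (Finset.mem_filter.mp hi).2
            have hμi : μ i < 1 := by
              by_contra hcon
              simp [hχdef, hcon] at hne
            nlinarith
        _ ≤ ∑ i, (2 - μ i) ^ 2 :=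
            Finset.sum_le_sum_of_subset_of_nonneg (Finset.filter_subset _ _)
              fun i _ _ => sq_nonneg _
    have hsq : ∑ i, (2 - μ i) ^ 2 ≤ (2 * ρ) ^ 2 := by
      have h := sq_vecNorm (fun i => 2 - μ i)
      nlinarith [vecNorm_nonneg (fun i => 2 - μ i)]
    calc Real.sqrt (Fintype.card {i // χ i ≠ 0} : ℝ)
        ≤ Real.sqrt ((2 * ρ) ^ 2) := Real.sqrt_le_sqrt (le_trans hsum hsq)
      _ = 2 * ρ := Real.sqrt_sq (by linarith)
  -- Frobenius bounds on terms 1 and 2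
  have hrank1 : Real.sqrt (((M * Con χ) * (X₁ - X₂) * Mᵀ).rank : ℝ) ≤ 2 * ρ := by
    refine le_trans (Real.sqrt_le_sqrt ?_) hcard
    have : ((M * Con χ) * (X₁ - X₂) * Mᵀ).rank ≤ Fintype.card {i // χ i ≠ 0} := by
      calc ((M * Con χ) * (X₁ - X₂) * Mᵀ).rank ≤ ((M * Con χ) * (X₁ - X₂)).rank :=
            Matrix.rank_mul_le_left _ _
        _ ≤ (M * Con χ).rank := Matrix.rank_mul_le_left _ _
        _ ≤ _ := hrkQ
    exact_mod_cast this
  have hrank2 : Real.sqrt ((((M * Con (1 - χ)) * (X₁ - X₂) * (M * Con χ)ᵀ).rank : ℝ)) ≤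
      2 * ρ := by
    refine le_trans (Real.sqrt_le_sqrt ?_) hcard
    have : ((M * Con (1 - χ)) * (X₁ - X₂) * (M * Con χ)ᵀ).rank ≤
        Fintype.card {i // χ i ≠ 0} := by
      calc ((M * Con (1 - χ)) * (X₁ - X₂) * (M * Con χ)ᵀ).rank
          ≤ ((M * Con χ)ᵀ).rank := Matrix.rank_mul_le_right _ _
        _ = (M * Con χ).rank := Matrix.rank_transpose _
        _ ≤ _ := hrkQ
    exact_mod_cast this
  have fb1 : frobNorm ((M * Con χ) * (X₁ - X₂) * Mᵀ) ≤ 2 * ρ * (2 * N) := by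
    calc frobNorm ((M * Con χ) * (X₁ - X₂) * Mᵀ)
        ≤ Real.sqrt (((M * Con χ) * (X₁ - X₂) * Mᵀ).rank : ℝ) *
          opNorm ((M * Con χ) * (X₁ - X₂) * Mᵀ) := frobNorm_le_sqrt_rank_mul_opNorm _
      _ ≤ 2 * ρ * (2 * N) :=
          mul_le_mul hrank1 hopT1 (opNorm_nonneg _) (by linarith)
  have fb2 : frobNorm ((M * Con (1 - χ)) * (X₁ - X₂) * (M * Con χ)ᵀ) ≤ 2 * ρ * (2 * N) := by
    calc frobNorm ((M * Con (1 - χ)) * (X₁ - X₂) * (M * Con χ)ᵀ)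
        ≤ Real.sqrt ((((M * Con (1 - χ)) * (X₁ - X₂) * (M * Con χ)ᵀ).rank : ℝ)) *
          opNorm ((M * Con (1 - χ)) * (X₁ - X₂) * (M * Con χ)ᵀ) :=
          frobNorm_le_sqrt_rank_mul_opNorm _
      _ ≤ 2 * ρ * (2 * N) := mul_le_mul hrank2 hopT2 (opNorm_nonneg _) (by linarith)
  -- third term
  have hidem : (1 - χ) * (1 - χ) = (1 - χ) := by
    funext i
    by_cases h : μ i < 1 <;> simp [hχdef, h, Pi.sub_apply, Pi.mul_apply]
  have hMPMt_quad : ∀ u, u ⬝ᵥ ((M * Con (1 - χ) * Mᵀ) *ᵥ u) ≤ 2 * N * vecNorm u ^ 2 := by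
    intro u
    have hpsd : (M * (X₁ + X₂) * Mᵀ - M * Con (1 - χ) * Mᵀ).PosSemidef := by
      have e2 : M * (X₁ + X₂) * Mᵀ - M * Con (1 - χ) * Mᵀ =
          M * Con (μ - (1 - χ)) * Mᵀ := by
        rw [hCon_S, show Con (μ - (1 - χ)) = Con μ - Con (1 - χ) from (hCon_sub _ _).symm]
        noncomm_ring
      rw [e2]
      have hps : (Con (μ - (1 - χ))).PosSemidef := by
        refine hCon_psd _ fun i => ?_
        simp only [Pi.sub_apply, Pi.one_apply]
        by_cases h : μ i < 1
        · simp [hχdef, h]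
          exact hμ0 i
        · simp [hχdef, h]
          linarith [not_lt.mp h]
      have := hps.mul_mul_conjTranspose_same M
      rwa [conjT_eq_transpose] at this
    have hnn := psd_quad_nonneg hpsd u
    rw [Matrix.sub_mulVec, dotProduct_sub] at hnn
    have hle : u ⬝ᵥ ((M * Con (1 - χ) * Mᵀ) *ᵥ u) ≤
        u ⬝ᵥ ((M * (X₁ + X₂) * Mᵀ) *ᵥ u) := by linarith
    exact le_trans hle (hMSM_quad u)
  have hopMP : opNorm (M * Con (1 - χ)) ≤ Real.sqrt (2 * N) := by
    have hW : (M * Con (1 - χ) * Mᵀ).PosSemidef := by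
      have hps : (Con (1 - χ)).PosSemidef := by
        refine hCon_psd _ fun i => ?_
        by_cases h : μ i < 1 <;> simp [hχdef, h, Pi.sub_apply]
      have := hps.mul_mul_conjTranspose_same M
      rwa [conjT_eq_transpose] at this
    have hWop : opNorm (M * Con (1 - χ) * Mᵀ) ≤ 2 * N := psd_opNorm_le hW h2N hMPMt_quad
    have hsq : opNorm (M * Con (1 - χ)) ^ 2 = opNorm (M * Con (1 - χ) * Mᵀ) := by
      have h := opNorm_mul_transpose_self (M * Con (1 - χ))
      have e : (M * Con (1 - χ)) * (M * Con (1 - χ))ᵀ = M * Con (1 - χ) * Mᵀ := by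
        rw [Matrix.transpose_mul, hCon_T]
        calc M * Con (1 - χ) * (Con (1 - χ) * Mᵀ)
            = M * (Con (1 - χ) * Con (1 - χ)) * Mᵀ := by noncomm_ring
          _ = M * Con (1 - χ) * Mᵀ := by rw [hCon_mul, hidem]
      rw [e] at h
      exact h.symm
    rw [Real.le_sqrt (opNorm_nonneg _) h2N, hsq]
    exact hWop
  have hfrobΔ : frobNorm (X₁ - X₂) ≤ 2 * ρ := by
    have e : X₁ - X₂ = (1 - X₂) - (1 - X₁) := by abel
    rw [e]
    exact le_trans (frobNorm_sub_le _ _) (by linarith)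
  have fb3 : frobNorm ((M * Con (1 - χ)) * (X₁ - X₂) * (M * Con (1 - χ))ᵀ) ≤
      2 * ρ * (2 * N) := by
    have hsqrtN : 0 ≤ Real.sqrt (2 * N) := Real.sqrt_nonneg _
    calc frobNorm ((M * Con (1 - χ)) * (X₁ - X₂) * (M * Con (1 - χ))ᵀ)
        ≤ opNorm (M * Con (1 - χ)) * frobNorm ((X₁ - X₂) * (M * Con (1 - χ))ᵀ) := by
          have h := frobNorm_mul_le_opNorm_mul (M * Con (1 - χ))
            ((X₁ - X₂) * (M * Con (1 - χ))ᵀ)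
          rwa [← Matrix.mul_assoc] at h
      _ ≤ opNorm (M * Con (1 - χ)) * (frobNorm (X₁ - X₂) * opNorm ((M * Con (1 - χ))ᵀ)) :=
          mul_le_mul_of_nonneg_left (frobNorm_mul_le_mul_opNorm _ _) (opNorm_nonneg _)
      _ ≤ Real.sqrt (2 * N) * (2 * ρ * Real.sqrt (2 * N)) := by
          have hopMPt : opNorm ((M * Con (1 - χ))ᵀ) ≤ Real.sqrt (2 * N) := by
            rw [opNorm_transpose]
            exact hopMP
          have h2'' := frobNorm_nonneg (X₁ - X₂)
          have h3'' := opNorm_nonneg ((M * Con (1 - χ))ᵀ)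
          refine mul_le_mul hopMP ?_ (mul_nonneg h2'' h3'') (Real.sqrt_nonneg _)
          exact mul_le_mul hfrobΔ hopMPt h3'' (by linarith)
      _ = Real.sqrt (2 * N) * Real.sqrt (2 * N) * (2 * ρ) := by ring
      _ = 2 * ρ * (2 * N) := by rw [Real.mul_self_sqrt h2N]; ring
  -- decomposition
  have hdec : M * X₁ * Mᵀ - M * X₂ * Mᵀ =
      (M * Con χ) * (X₁ - X₂) * Mᵀ +
        ((M * Con (1 - χ)) * (X₁ - X₂) * (M * Con χ)ᵀ +
          (M * Con (1 - χ)) * (X₁ - X₂) * (M * Con (1 - χ))ᵀ) := by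
    have hPQ : Con (1 - χ) = 1 - Con χ := by
      rw [← hCon_one, hCon_sub]
    have t1 : (M * Con χ)ᵀ = Con χ * Mᵀ := by rw [Matrix.transpose_mul, hCon_T]
    have t2 : (M * Con (1 - χ))ᵀ = Con (1 - χ) * Mᵀ := by
      rw [Matrix.transpose_mul, hCon_T]
    rw [t1, t2, hPQ]
    noncomm_ring
  rw [hdec]
  have hρN : 0 ≤ ρ * N := mul_nonneg hρ0 hN
  calc frobNorm ((M * Con χ) * (X₁ - X₂) * Mᵀ +
        ((M * Con (1 - χ)) * (X₁ - X₂) * (M * Con χ)ᵀ +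
          (M * Con (1 - χ)) * (X₁ - X₂) * (M * Con (1 - χ))ᵀ))
      ≤ frobNorm ((M * Con χ) * (X₁ - X₂) * Mᵀ) +
        frobNorm ((M * Con (1 - χ)) * (X₁ - X₂) * (M * Con χ)ᵀ +
          (M * Con (1 - χ)) * (X₁ - X₂) * (M * Con (1 - χ))ᵀ) := frobNorm_add_le _ _
    _ ≤ frobNorm ((M * Con χ) * (X₁ - X₂) * Mᵀ) +
        (frobNorm ((M * Con (1 - χ)) * (X₁ - X₂) * (M * Con χ)ᵀ) +
          frobNorm ((M * Con (1 - χ)) * (X₁ - X₂) * (M * Con (1 - χ))ᵀ)) := by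
        have := frobNorm_add_le ((M * Con (1 - χ)) * (X₁ - X₂) * (M * Con χ)ᵀ)
          ((M * Con (1 - χ)) * (X₁ - X₂) * (M * Con (1 - χ))ᵀ)
        linarith
    _ ≤ 2 * ρ * (2 * N) + (2 * ρ * (2 * N) + 2 * ρ * (2 * N)) := by linarith
    _ ≤ 20 * ρ * N := by nlinarith

lemma sqrt_symm {H : Matrix (Fin d) (Fin d) ℝ} (hH : H.PosDef) :
    (posSemidefSqrt hH.posSemidef)ᵀ = posSemidefSqrt hH.posSemidef := by
  exact posSemidefSqrt_transpose hH.posSemidef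

lemma sqrt_isUnit_det {H : Matrix (Fin d) (Fin d) ℝ} (hH : H.PosDef) :
    IsUnit (posSemidefSqrt hH.posSemidef).det := by
  have hdet : (posSemidefSqrt hH.posSemidef).det * (posSemidefSqrt hH.posSemidef).det = H.det := by
    rw [← Matrix.det_mul, posSemidefSqrt_mul_self hH.posSemidef]
  have hpos := hH.det_pos
  have hne : (posSemidefSqrt hH.posSemidef).det ≠ 0 := by
    intro h
    rw [← hdet, h, mul_zero] at hpos
    exact lt_irrefl _ hpos
  exact hne.isUnit

lemma inv_symm {H : Matrix (Fin d) (Fin d) ℝ} (hH : H.PosDef) :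
    ((posSemidefSqrt hH.posSemidef)⁻¹)ᵀ = (posSemidefSqrt hH.posSemidef)⁻¹ := by
  rw [Matrix.transpose_nonsing_inv, sqrt_symm hH]


end AuxLemmas

/-- if a single positive definite `H` is an approximate square root of both
`Sig₁` and `Sig₂` (in relative Frobenius norm, up to `ρ ≥ 1`), then `Sig₁` and `Sig₂` are close in
the norm relative to any positive definite `Σ`. -/
theorem statement15 (d : ℕ) (ρ : ℝ) (hρ : 1 ≤ ρ)
    (Sig₁ Sig₂ : Matrix (Fin d) (Fin d) ℝ) (h₁ : Sig₁.PosDef) (h₂ : Sig₂.PosDef)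
    (H : Matrix (Fin d) (Fin d) ℝ) (hH : H.PosDef)
    (hb₁ : frobNorm (1 - (posSemidefSqrt hH.posSemidef)⁻¹ * Sig₁ * (posSemidefSqrt hH.posSemidef)⁻¹) ≤ ρ)
    (hb₂ : frobNorm (1 - (posSemidefSqrt hH.posSemidef)⁻¹ * Sig₂ * (posSemidefSqrt hH.posSemidef)⁻¹) ≤ ρ)
    (Sig : Matrix (Fin d) (Fin d) ℝ) (hSig : Sig.PosDef) :
    frobNorm ((posSemidefSqrt hSig.posSemidef)⁻¹ * Sig₁ * (posSemidefSqrt hSig.posSemidef)⁻¹ -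
        (posSemidefSqrt hSig.posSemidef)⁻¹ * Sig₂ * (posSemidefSqrt hSig.posSemidef)⁻¹) ≤
      20 * ρ * max (opNorm ((posSemidefSqrt hSig.posSemidef)⁻¹ * Sig₁ * (posSemidefSqrt hSig.posSemidef)⁻¹))
        (opNorm ((posSemidefSqrt hSig.posSemidef)⁻¹ * Sig₂ * (posSemidefSqrt hSig.posSemidef)⁻¹)) := by
  
  set sH := posSemidefSqrt hH.posSemidef with hsHdef
  set sS := posSemidefSqrt hSig.posSemidef with hsSdef
  have hinv : sH⁻¹ * sH = 1 := Matrix.nonsing_inv_mul _ (sqrt_isUnit_det hH)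
  have hinv' : sH * sH⁻¹ = 1 := Matrix.mul_nonsing_inv _ (sqrt_isUnit_det hH)
  have hitH : (sH⁻¹)ᵀ = sH⁻¹ := inv_symm hH
  have hitS : (sS⁻¹)ᵀ = sS⁻¹ := inv_symm hSig
  have hX1 : (sH⁻¹ * Sig₁ * sH⁻¹).PosSemidef := by
    have := h₁.posSemidef.mul_mul_conjTranspose_same sH⁻¹
    rwa [conjT_eq_transpose, hitH] at this
  have hX2 : (sH⁻¹ * Sig₂ * sH⁻¹).PosSemidef := by
    have := h₂.posSemidef.mul_mul_conjTranspose_same sH⁻¹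
    rwa [conjT_eq_transpose, hitH] at this
  have hMt : (sS⁻¹ * sH)ᵀ = sH * sS⁻¹ := by
    rw [Matrix.transpose_mul, hitS, sqrt_symm hH]
  have key := core_bound hρ (sS⁻¹ * sH) (sH⁻¹ * Sig₁ * sH⁻¹) (sH⁻¹ * Sig₂ * sH⁻¹)
    hX1 hX2 hb₁ hb₂
  have e : ∀ G : Matrix (Fin d) (Fin d) ℝ,
      (sS⁻¹ * sH) * (sH⁻¹ * G * sH⁻¹) * (sS⁻¹ * sH)ᵀ = sS⁻¹ * G * sS⁻¹ := by
    intro G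
    rw [hMt]
    calc sS⁻¹ * sH * (sH⁻¹ * G * sH⁻¹) * (sH * sS⁻¹)
        = sS⁻¹ * ((sH * sH⁻¹) * G * (sH⁻¹ * sH)) * sS⁻¹ := by noncomm_ring
      _ = sS⁻¹ * G * sS⁻¹ := by
          rw [hinv, hinv', Matrix.one_mul, Matrix.mul_one]
  rwa [e Sig₁, e Sig₂] at key


end ListDecCov
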